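/- Suppose P is a unitary on H such that for every k with 0 ≤ k < N_c, P(e_0 ⊗ e_0 ⊗ e_k ⊗ e_0 ⊗ e_0) = (Σ_{j<N_r} sgn(A_{jk})·√(|A_{jk}|/c_max) · e_j ⊗ e_0 + √(1 − c_k/c_max) · e_0 ⊗ e_1) ⊗ e_k ⊗ e_0 ⊗ e_0, and for every k with N_c ≤ k < m, P(e_0 ⊗ e_0 ⊗ e_k ⊗ e_0 ⊗ e_0) = e_0 ⊗ e_0 ⊗ e_k ⊗ e_0 ⊗ e_1; and suppose Q is a unitary on H such that for every j with 0 ≤ j < N_r, Q(e_j ⊗ e_0 ⊗ e_0 ⊗ e_0 ⊗ e_0) = e_j ⊗ e_0 ⊗ (Σ_{k<N_c} √(|A_{jk}|/r_max) · e_k ⊗ e_0 + √(1 − r_j/r_max) · e_0 ⊗ e_1) ⊗ e_0, and for every j with N_r ≤ j < m, Q(e_j ⊗ e_0 ⊗ e_0 ⊗ e_0 ⊗ e_0) = e_j ⊗ e_0 ⊗ e_0 ⊗ e_0 ⊗ e_1. Then the unitary U = SWAP_{r,c} ∘ Q† ∘ P satisfies, for all j, k ∈ {0,…,m−1}, ⟨e_0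 ⊗ e_0 ⊗ e_j ⊗ e_0 ⊗ e_0, U(e_0 ⊗ e_0 ⊗ e_k ⊗ e_0 ⊗ e_0)⟩ = A'_{jk}/√(r_max·c_max); that is, U is a (√(r_max·c_max), q+b+2, 0)-block encoding of A'. -/

import Mathlib

open scoped InnerProductSpace

/-- The standard basis vector `e_i` of `EuclideanSpace ℂ ι`. -/
noncomputable def ket {ι : Type*} [DecidableEq ι] (i : ι) : EuclideanSpace ℂ ι :=
  EuclideanSpace.single i 1

/-- **Correctness of the row/column-oracle block encoding (Lemma 47 of Gilyén et al.).**
The Hilbert space is `H = H_r ⊗ H_rslack ⊗ H_c ⊗ H_cslack ⊗ H_anc`, realized as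
`EuclideanSpace ℂ (Fin m × Fin 2 × Fin m × Fin 2 × Fin pa)` with `m = 2^b`,
`pa = 2^q`; `ket (j, s, k, t, a)` is the product basis vector
`e_j ⊗ e_s ⊗ e_k ⊗ e_t ⊗ e_a`, and `S` is the unitary `SWAP_{r,c}` exchanging the `r`
and `c` factors.  Given the "column oracle" `P` and "row oracle" `Q` (unitaries acting
on the relevant basis vectors as displayed, with `sgn(z) = z/|z|`, `sgn 0 = 0`,
`c_k = Σ_j |A_{jk}|`, `r_j = Σ_k |A_{jk}|`, `c_max = max_k c_k > 0`,
`r_max = max_j r_j > 0`), the unitary `U = SWAP_{r,c} ∘ Q† ∘ P` satisfies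
`⟨e_0⊗e_0⊗e_j⊗e_0⊗e_0, U (e_0⊗e_0⊗e_k⊗e_0⊗e_0)⟩ = A'_{jk}/√(r_max·c_max)` for all
`j, k`, where `A'` is the top-left zero embedding of `A` into `ℂ^{m×m}`; that is, `U`
is a `(√(r_max·c_max), q+b+2, 0)`-block encoding of `A'`. -/
lemma inner_ket_left {ι : Type*} [DecidableEq ι] [Fintype ι] (i : ι)
    (v : EuclideanSpace ℂ ι) : ⟪ket i, v⟫_ℂ = v i := by
  simp [ket, EuclideanSpace.inner_single_left]

lemma inner_ket_ket {ι : Type*} [DecidableEq ι] [Fintype ι] (i i' : ι) :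
    ⟪ket i, ket i'⟫_ℂ = if i = i' then 1 else 0 := by
  rw [inner_ket_left]
  simp [ket, EuclideanSpace.single_apply, eq_comm]



theorem stmt19 (b q Nr Nc m pa : ℕ)
    (hb : 1 ≤ b) (hq : 1 ≤ q) (hm : m = 2 ^ b) (hpa : pa = 2 ^ q)
    [NeZero m] [NeZero pa]
    (hNr1 : 1 ≤ Nr) (hNrm : Nr ≤ m) (hNc1 : 1 ≤ Nc) (hNcm : Nc ≤ m)
    (A : Matrix (Fin Nr) (Fin Nc) ℂ) (hA : A ≠ 0)
    (cmax rmax : ℝ)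
    (hcmax : IsGreatest (Set.range fun k : Fin Nc => ∑ j, ‖A j k‖) cmax)
    (hrmax : IsGreatest (Set.range fun j : Fin Nr => ∑ k, ‖A j k‖) rmax)
    (hcpos : 0 < cmax) (hrpos : 0 < rmax)
    (A' : Matrix (Fin m) (Fin m) ℂ)
    (hA' : ∀ j k : Fin m, A' j k =
      if hj : j.val < Nr then
        (if hk : k.val < Nc then A ⟨j.val, hj⟩ ⟨k.val, hk⟩ else 0)
      else 0)
    (P Q S : EuclideanSpace ℂ (Fin m × Fin 2 × Fin m × Fin 2 × Fin pa) ≃ₗᵢ[ℂ]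
      EuclideanSpace ℂ (Fin m × Fin 2 × Fin m × Fin 2 × Fin pa))
    (hS : ∀ (x : EuclideanSpace ℂ (Fin m × Fin 2 × Fin m × Fin 2 × Fin pa))
      (j k : Fin m) (s t : Fin 2) (a : Fin pa),
      S x (j, s, k, t, a) = x (k, s, j, t, a))
    (hP1 : ∀ k : Fin Nc,
      P (ket ((0 : Fin m), (0 : Fin 2), Fin.castLE hNcm k, (0 : Fin 2), (0 : Fin pa))) =
        (∑ j : Fin Nr, ((A j k / (‖A j k‖ : ℂ)) * ((Real.sqrt (‖A j k‖ / cmax) : ℝ) : ℂ)) •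
            ket (Fin.castLE hNrm j, (0 : Fin 2), Fin.castLE hNcm k, (0 : Fin 2), (0 : Fin pa)))
        + ((Real.sqrt (1 - (∑ j, ‖A j k‖) / cmax) : ℝ) : ℂ) •
            ket ((0 : Fin m), (1 : Fin 2), Fin.castLE hNcm k, (0 : Fin 2), (0 : Fin pa)))
    (hP2 : ∀ k : Fin m, Nc ≤ k.val →
      P (ket ((0 : Fin m), (0 : Fin 2), k, (0 : Fin 2), (0 : Fin pa))) =
        ket ((0 : Fin m), (0 : Fin 2), k, (0 : Fin 2), (1 : Fin pa)))
    (hQ1 : ∀ j : Fin Nr,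
      Q (ket (Fin.castLE hNrm j, (0 : Fin 2), (0 : Fin m), (0 : Fin 2), (0 : Fin pa))) =
        (∑ k : Fin Nc, ((Real.sqrt (‖A j k‖ / rmax) : ℝ) : ℂ) •
            ket (Fin.castLE hNrm j, (0 : Fin 2), Fin.castLE hNcm k, (0 : Fin 2), (0 : Fin pa)))
        + ((Real.sqrt (1 - (∑ k, ‖A j k‖) / rmax) : ℝ) : ℂ) •
            ket (Fin.castLE hNrm j, (0 : Fin 2), (0 : Fin m), (1 : Fin 2), (0 : Fin pa)))
    (hQ2 : ∀ j : Fin m, Nr ≤ j.val →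
      Q (ket (j, (0 : Fin 2), (0 : Fin m), (0 : Fin 2), (0 : Fin pa))) =
        ket (j, (0 : Fin 2), (0 : Fin m), (0 : Fin 2), (1 : Fin pa))) :
    ∀ j k : Fin m,
      ⟪ket ((0 : Fin m), (0 : Fin 2), j, (0 : Fin 2), (0 : Fin pa)),
        S (Q.symm (P (ket ((0 : Fin m), (0 : Fin 2), k, (0 : Fin 2), (0 : Fin pa)))))⟫_ℂ
        = A' j k / ((Real.sqrt (rmax * cmax) : ℝ) : ℂ) := by
  intro j k
  have hpa2 : 2 ≤ pa := by
    subst hpa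
    calc 2 = 2 ^ 1 := rfl
    _ ≤ 2 ^ q := Nat.pow_le_pow_right (by norm_num) hq
  have h10 : (1 : Fin pa) ≠ 0 := by
    intro h
    have := congrArg Fin.val h
    rw [Fin.val_one'] at this
    simp [Nat.mod_eq_of_lt (by omega : 1 < pa)] at this
  have h01 : (0 : Fin pa) ≠ 1 := h10.symm
  have h2a : (0 : Fin 2) ≠ 1 := by decide
  have h2b : (1 : Fin 2) ≠ 0 := by decide
  rw [inner_ket_left, hS,
    show (Q.symm (P (ket ((0 : Fin m), (0 : Fin 2), k, (0 : Fin 2), (0 : Fin pa)))))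
        (j, (0 : Fin 2), (0 : Fin m), (0 : Fin 2), (0 : Fin pa))
      = ⟪ket (j, (0 : Fin 2), (0 : Fin m), (0 : Fin 2), (0 : Fin pa)),
          Q.symm (P (ket ((0 : Fin m), (0 : Fin 2), k, (0 : Fin 2), (0 : Fin pa))))⟫_ℂ
      from (inner_ket_left _ _).symm,
    ← Q.inner_map_map, Q.apply_symm_apply, hA' j k]
  by_cases hj : (j : ℕ) < Nr
  · have hjc : Fin.castLE hNrm ⟨j.1, hj⟩ = j := Fin.ext rfl
    have e1 : ket (j, (0 : Fin 2), (0 : Fin m), (0 : Fin 2), (0 : Fin pa))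
        = ket (Fin.castLE hNrm ⟨j.1, hj⟩, (0 : Fin 2), (0 : Fin m), (0 : Fin 2), (0 : Fin pa)) := by
      rw [hjc]
    rw [e1, hQ1 ⟨j.1, hj⟩, dif_pos hj]
    by_cases hk : (k : ℕ) < Nc
    · have hkc : Fin.castLE hNcm ⟨k.1, hk⟩ = k := Fin.ext rfl
      have e2 : ket ((0 : Fin m), (0 : Fin 2), k, (0 : Fin 2), (0 : Fin pa))
          = ket ((0 : Fin m), (0 : Fin 2), Fin.castLE hNcm ⟨k.1, hk⟩, (0 : Fin 2), (0 : Fin pa)) := by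
        rw [hkc]
      rw [e2, hP1 ⟨k.1, hk⟩, dif_pos hk]
      simp only [inner_add_left, inner_add_right, sum_inner, inner_sum, inner_smul_left,
        inner_smul_right, inner_ket_ket, Prod.mk.injEq, Fin.castLE_inj, h10, h01, h2a, h2b,
        and_true, true_and, and_false, false_and, if_false, if_true, mul_zero, zero_mul,
        Finset.sum_const_zero, add_zero, zero_add, ite_and, mul_ite, mul_one,
        Finset.sum_ite_eq, Finset.sum_ite_eq', Finset.mem_univ, if_true,
        Complex.conj_ofReal]
      rw [Finset.sum_eq_single (⟨j.1, hj⟩ : Fin Nr)]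
      · simp only [if_pos rfl, Finset.sum_ite_eq, Finset.sum_ite_eq', Finset.mem_univ, if_true]
        set z := A ⟨j.1, hj⟩ ⟨k.1, hk⟩ with hzdef
        by_cases hz : z = 0
        · simp [hz]
        · have ha : (0 : ℝ) < ‖z‖ := norm_pos_iff.2 hz
          have hr : Real.sqrt (‖z‖ / cmax) * Real.sqrt (‖z‖ / rmax)
              = ‖z‖ / Real.sqrt (rmax * cmax) := by
            rw [← Real.sqrt_mul (by positivity)]
            have h : ‖z‖ / cmax * (‖z‖ / rmax) = (‖z‖ / Real.sqrt (rmax * cmax)) ^ 2 := by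
              rw [div_pow, Real.sq_sqrt (by positivity)]; ring
            rw [h, Real.sqrt_sq (by positivity)]
          have hs : Real.sqrt (rmax * cmax) ≠ 0 := by positivity
          have hza : (‖z‖ : ℂ) ≠ 0 := by exact_mod_cast ha.ne'
          have hsc : ((Real.sqrt (rmax * cmax) : ℝ) : ℂ) ≠ 0 := by exact_mod_cast hs
          rw [mul_assoc, ← Complex.ofReal_mul, hr, Complex.ofReal_div]
          rw [div_mul_div_comm, mul_comm z, mul_div_mul_left _ _ hza]
      · intro x _ hx
        simp [Ne.symm hx]
      · simp
    · have e2 : ket ((0 : Fin m), (0 : Fin 2), k, (0 : Fin 2), (0 : Fin pa))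
          = ket ((0 : Fin m), (0 : Fin 2), k, (0 : Fin 2), (0 : Fin pa)) := rfl
      rw [hP2 k (le_of_not_gt hk), dif_neg hk, zero_div]
      simp only [inner_add_left, sum_inner, inner_smul_left, inner_ket_ket, Prod.mk.injEq,
        h10, h01, h2a, h2b, and_true, true_and, and_false, false_and, if_false, mul_zero,
        Finset.sum_const_zero, add_zero, zero_add]
  · rw [hQ2 j (le_of_not_gt hj), dif_neg hj, zero_div]
    have hj0 : j ≠ (0 : Fin m) := by
      intro h
      apply hj
      rw [h]
      simp only [Fin.val_zero]; omega
    by_cases hk : (k : ℕ) < Nc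
    · have hkc : Fin.castLE hNcm ⟨k.1, hk⟩ = k := Fin.ext rfl
      have e2 : ket ((0 : Fin m), (0 : Fin 2), k, (0 : Fin 2), (0 : Fin pa))
          = ket ((0 : Fin m), (0 : Fin 2), Fin.castLE hNcm ⟨k.1, hk⟩, (0 : Fin 2), (0 : Fin pa)) := by
        rw [hkc]
      rw [e2, hP1 ⟨k.1, hk⟩]
      simp only [inner_add_right, inner_sum, inner_smul_right, inner_ket_ket, Prod.mk.injEq,
        h10, h01, h2a, h2b, and_true, true_and, and_false, false_and, if_false, mul_zero,
        Finset.sum_const_zero, add_zero, zero_add]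
    · rw [hP2 k (le_of_not_gt hk)]
      rw [inner_ket_ket, if_neg]
      intro h
      exact hj0 (congrArg Prod.fst h)
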